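/- arXiv:1306.0943 — 3 statements merged into one kernel-verified Lean document; each statement's English description precedes it below -/
import Mathlib

section
/- Let n ≥ 3 and let A be a set of 2n positive integers. If A has exactly (1/2)·binomial(2n, n) divisors of size n, then A is an n-anti-pencil. -/
open Finset

set_option linter.unusedVariables false



/-- n-element subsets of A -/
def psetN (A : Finset ℕ) (n : ℕ) : Finset (Finset ℕ) := A.powerset.filter (fun B => B.card = n)

def lowS (A : Finset ℕ) (n : ℕ) : Finset (Finset ℕ) :=
  (psetN A n).filter (fun B => 2 * B.sum id < A.sum id)

def highS (A : Finset ℕ) (n : ℕ) : Finset (Finset ℕ) :=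
  (psetN A n).filter (fun B => A.sum id < 2 * B.sum id)

def halfS (A : Finset ℕ) (n : ℕ) : Finset (Finset ℕ) :=
  (psetN A n).filter (fun B => 2 * B.sum id = A.sum id)

def phiS (A : Finset ℕ) (n : ℕ) : Finset (Finset ℕ) :=
  (lowS A n).filter (fun B => ¬ B.sum id ∣ A.sum id)

def goodsH (A H : Finset ℕ) : Finset (ℕ × ℕ) :=
  (H ×ˢ (A \ H)).filter (fun p => p.2 < p.1 ∧ ¬ ((H.sum id + p.2) - p.1) ∣ A.sum id)

lemma mem_psetN {A B : Finset ℕ} {n : ℕ} : B ∈ psetN A n ↔ B ⊆ A ∧ B.card = n := by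
  simp [psetN]

lemma card_psetN {A : Finset ℕ} {n : ℕ} (h : A.card = 2 * n) :
    (psetN A n).card = (2 * n).choose n := by
  rw [psetN, ← Finset.powersetCard_eq_filter, Finset.card_powersetCard, h]

lemma sum_compl_add {A B : Finset ℕ} (h : B ⊆ A) :
    (A \ B).sum id + B.sum id = A.sum id := Finset.sum_sdiff h

lemma compl_mem_psetN {A B : Finset ℕ} {n : ℕ} (hA : A.card = 2 * n) (hB : B ∈ psetN A n) :
    (A \ B) ∈ psetN A n := by
  rw [mem_psetN] at hB ⊢
  refine ⟨Finset.sdiff_subset, ?_⟩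
  rw [Finset.card_sdiff_of_subset hB.1, hA, hB.2]
  omega

lemma compl_compl_eq {A B : Finset ℕ} (h : B ⊆ A) : A \ (A \ B) = B :=
  Finset.sdiff_sdiff_eq_self h

lemma card_low_eq_high {A : Finset ℕ} {n : ℕ} (hA : A.card = 2 * n) :
    (lowS A n).card = (highS A n).card := by
  apply Finset.card_bij (fun B _ => A \ B)
  · intro B hB
    rw [lowS, Finset.mem_filter] at hB
    have hsub := (mem_psetN.1 hB.1).1
    have hsum := sum_compl_add hsub
    rw [highS, Finset.mem_filter]
    exact ⟨compl_mem_psetN hA hB.1, by omega⟩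
  · intro B hB C hC h
    rw [lowS, Finset.mem_filter] at hB hC
    have := compl_compl_eq (mem_psetN.1 hB.1).1
    have := compl_compl_eq (mem_psetN.1 hC.1).1
    rw [← compl_compl_eq (mem_psetN.1 hB.1).1, h, compl_compl_eq (mem_psetN.1 hC.1).1]
  · intro C hC
    rw [highS, Finset.mem_filter] at hC
    have hsub := (mem_psetN.1 hC.1).1
    have hsum := sum_compl_add hsub
    refine ⟨A \ C, ?_, compl_compl_eq hsub⟩
    rw [lowS, Finset.mem_filter]
    refine ⟨compl_mem_psetN hA hC.1, by omega⟩










lemma sum_lt_of_mem {A B : Finset ℕ} {n : ℕ} (hn : 1 ≤ n) (hA : A.card = 2 * n)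
    (hpos : ∀ a ∈ A, 0 < a) (hB : B ∈ psetN A n) : B.sum id < A.sum id := by
  obtain ⟨hsub, hcard⟩ := mem_psetN.1 hB
  have hsum : (A \ B).sum id + B.sum id = A.sum id := Finset.sum_sdiff hsub
  have hne : (A \ B).Nonempty := by
    rw [← Finset.card_pos, Finset.card_sdiff_of_subset hsub, hA, hcard]; omega
  have hp : 0 < (A \ B).sum id :=
    Finset.sum_pos (fun i hi => hpos i (Finset.mem_sdiff.1 hi).1) hne
  omega

lemma trichotomy_card {A : Finset ℕ} {n : ℕ} :
    (psetN A n).card = (lowS A n).card + (halfS A n).card + (highS A n).card := by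
  have h1 := Finset.card_filter_add_card_filter_not
    (s := psetN A n) (p := fun B => 2 * B.sum id < A.sum id)
  have h2 := Finset.card_filter_add_card_filter_not
    (s := (psetN A n).filter (fun B => ¬ 2 * B.sum id < A.sum id))
    (p := fun B => 2 * B.sum id = A.sum id)
  have e1 : ((psetN A n).filter (fun B => ¬ 2 * B.sum id < A.sum id)).filter
      (fun B => 2 * B.sum id = A.sum id) = halfS A n := by
    rw [Finset.filter_filter, halfS]
    apply Finset.filter_congr
    intro B _; constructor
    · rintro ⟨-, h⟩; exact h
    · intro h; omega
  have e2 : ((psetN A n).filter (fun B => ¬ 2 * B.sum id < A.sum id)).filter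
      (fun B => ¬ 2 * B.sum id = A.sum id) = highS A n := by
    rw [Finset.filter_filter, highS]
    apply Finset.filter_congr
    intro B _; constructor
    · rintro ⟨h1, h2⟩; omega
    · intro h; omega
  rw [e1, e2] at h2
  rw [lowS]
  omega

lemma div_card_split {A : Finset ℕ} {n : ℕ} (hn : 1 ≤ n) (hA : A.card = 2 * n)
    (hpos : ∀ a ∈ A, 0 < a) :
    ((psetN A n).filter (fun B => B.sum id ∣ A.sum id)).card
      = (halfS A n).card + ((lowS A n).filter (fun B => B.sum id ∣ A.sum id)).card := by
  have key : ∀ B ∈ psetN A n, B.sum id ∣ A.sum id → 2 * B.sum id ≤ A.sum id := by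
    intro B hB hdvd
    have hlt := sum_lt_of_mem hn hA hpos hB
    obtain ⟨k, hk⟩ := hdvd
    rcases Nat.lt_or_ge k 2 with h | h
    · interval_cases k <;> omega
    · have : B.sum id * 2 ≤ B.sum id * k := Nat.mul_le_mul_left _ h
      omega
  have h2 := Finset.card_filter_add_card_filter_not
    (s := (psetN A n).filter (fun B => B.sum id ∣ A.sum id))
    (p := fun B => 2 * B.sum id = A.sum id)
  have e1 : ((psetN A n).filter (fun B => B.sum id ∣ A.sum id)).filter
      (fun B => 2 * B.sum id = A.sum id) = halfS A n := by
    ext B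
    simp only [Finset.mem_filter, halfS]
    constructor
    · rintro ⟨⟨h1, -⟩, h3⟩; exact ⟨h1, h3⟩
    · rintro ⟨h1, h2⟩; exact ⟨⟨h1, ⟨2, by omega⟩⟩, h2⟩
  have e2 : ((psetN A n).filter (fun B => B.sum id ∣ A.sum id)).filter
      (fun B => ¬ 2 * B.sum id = A.sum id) = (lowS A n).filter (fun B => B.sum id ∣ A.sum id) := by
    ext B
    simp only [Finset.mem_filter, lowS]
    constructor
    · rintro ⟨⟨h1, h2⟩, h3⟩
      have := key B h1 h2
      exact ⟨⟨h1, by omega⟩, h2⟩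
    · rintro ⟨⟨h1, h2⟩, h3⟩
      exact ⟨⟨h1, h3⟩, by omega⟩
  rw [e1, e2] at h2
  omega

lemma half_eq_two_phi {A : Finset ℕ} {n : ℕ} (hn : 1 ≤ n) (hA : A.card = 2 * n)
    (hpos : ∀ a ∈ A, 0 < a)
    (hnum : 2 * ((psetN A n).filter (fun B => B.sum id ∣ A.sum id)).card = (2*n).choose n)
    (hP : (psetN A n).card = (2*n).choose n) :
    (halfS A n).card = 2 * (phiS A n).card := by
  have h1 := trichotomy_card (A := A) (n := n)
  have h2 := div_card_split hn hA hpos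
  have h3 := card_low_eq_high hA
  have h4 := Finset.card_filter_add_card_filter_not
    (s := lowS A n) (p := fun B => B.sum id ∣ A.sum id)
  rw [phiS]
  omega




lemma three_le_of_dvd {t S : ℕ} (hdvd : t ∣ S) (hS : 0 < S) (h2 : 2 * t < S) : 3 * t ≤ S := by
  obtain ⟨k, hk⟩ := hdvd
  rcases Nat.lt_or_ge k 3 with h | h
  · interval_cases k <;> omega
  · have : t * 3 ≤ t * k := Nat.mul_le_mul_left _ h
    omega

lemma cross_ex (P : ℕ → Prop) [DecidablePred P] {n : ℕ} (h0 : P 0) (hn : ¬ P n) :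
    ∃ i < n, P i ∧ ¬ P (i + 1) := by
  induction n with
  | zero => exact absurd h0 hn
  | succ m ih =>
    by_cases hm : P m
    · exact ⟨m, Nat.lt_succ_self m, hm, hn⟩
    · obtain ⟨i, hi, h⟩ := ih hm
      exact ⟨i, hi.trans (Nat.lt_succ_self m), h⟩

lemma M_sets_high {A : Finset ℕ} {n M : ℕ} (hn : 3 ≤ n) (hA : A.card = 2 * n)
    (hpos : ∀ a ∈ A, 0 < a) (hM : M ∈ A) (hMmax : ∀ x ∈ A, x ≤ M)
    (hlowdiv : ∀ B ∈ psetN A n, 2 * B.sum id < A.sum id → B.sum id ∣ A.sum id)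
    (hnohalf : ∀ B ∈ psetN A n, ¬ 2 * B.sum id = A.sum id)
    {B : Finset ℕ} (hB : B ∈ psetN A n) (hMB : M ∈ B) :
    A.sum id < 2 * B.sum id := by
  classical
  set S := A.sum id with hS
  have hSpos : 0 < S := Finset.sum_pos (fun i hi => hpos i hi) ⟨M, hM⟩
  by_contra hcon
  push_neg at hcon
  have hBlow : 2 * B.sum id < S := lt_of_le_of_ne hcon (hnohalf B hB)
  have h3B : 3 * B.sum id ≤ S := three_le_of_dvd (hlowdiv B hB hBlow) hSpos hBlow
  -- M is small
  have hMle : M + (n - 1) ≤ B.sum id := by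
    have he : (B.erase M).sum id + M = B.sum id := by
      have := Finset.sum_erase_add B id hMB
      simpa using this
    have hcardE : (B.erase M).card = n - 1 := by
      rw [Finset.card_erase_of_mem hMB, (mem_psetN.1 hB).2]
    have hle : (B.erase M).card • 1 ≤ (B.erase M).sum id :=
      Finset.card_nsmul_le_sum _ _ 1
        (fun x hx => hpos x ((mem_psetN.1 hB).1 (Finset.mem_of_mem_erase hx)))
    simp only [smul_eq_mul, mul_one] at hle
    omega
  have hM3 : 3 * M + 3 * (n - 1) ≤ S := by omega
  -- middle exclusion
  have hmid : ∀ C ∈ psetN A n, 3 * C.sum id ≤ S ∨ 2 * S ≤ 3 * C.sum id := by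
    intro C hC
    obtain ⟨hCsub, hCcard⟩ := mem_psetN.1 hC
    have hsum : (A \ C).sum id + C.sum id = S := Finset.sum_sdiff hCsub
    rcases Nat.lt_trichotomy (2 * C.sum id) S with h | h | h
    · exact Or.inl (three_le_of_dvd (hlowdiv C hC h) hSpos h)
    · exact absurd h (hnohalf C hC)
    · right
      have hcomp : (A \ C) ∈ psetN A n := by
        rw [mem_psetN]
        refine ⟨Finset.sdiff_subset, ?_⟩
        rw [Finset.card_sdiff_of_subset hCsub, hA, hCcard]
        omega
      have hclow : 2 * (A \ C).sum id < S := by omega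
      have := three_le_of_dvd (hlowdiv _ hcomp hclow) hSpos hclow
      omega
  -- the sorted list
  set l := A.sort (· ≤ ·) with hl
  have hlen : l.length = 2 * n := by rw [hl, Finset.length_sort, hA]
  have hnodup : l.Nodup := Finset.sort_nodup _ _
  have hsorted : l.Pairwise (· ≤ ·) := Finset.pairwise_sort _ _
  have htofin : l.toFinset = A := Finset.sort_toFinset _ _
  have hmemA : ∀ x ∈ l, x ∈ A := by
    intro x hx
    rw [← htofin]
    exact List.mem_toFinset.2 hx
  have hlsum : l.sum = S := by
    rw [hS, ← htofin, List.sum_toFinset _ hnodup, List.map_id]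
  -- window sets
  set win : ℕ → Finset ℕ := fun i => (l.take (n + i)).toFinset \ (l.take i).toFinset with hwin
  set T : ℕ → ℕ := fun k => (l.take k).sum with hT
  have htakelen : ∀ k, k ≤ 2 * n → (l.take k).length = k := by
    intro k hk
    rw [List.length_take, hlen]
    omega
  have htfcard : ∀ k, k ≤ 2 * n → (l.take k).toFinset.card = k := by
    intro k hk
    rw [List.toFinset_card_of_nodup (hnodup.sublist (List.take_sublist _ _)), htakelen k hk]
  have htfsum : ∀ k, (l.take k).toFinset.sum id = T k := by
    intro k
    rw [List.sum_toFinset _ (hnodup.sublist (List.take_sublist _ _)), List.map_id, hT]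
  have hsubtake : ∀ i, (l.take i).toFinset ⊆ (l.take (n + i)).toFinset := by
    intro i
    intro x hx
    rw [List.mem_toFinset] at hx ⊢
    have : l.take i = (l.take (n + i)).take i := by
      rw [List.take_take]
      congr 1
      omega
    rw [this] at hx
    exact (List.take_subset _ _) hx
  -- window membership & sums
  have hwinmem : ∀ i, i ≤ n → win i ∈ psetN A n := by
    intro i hi
    rw [mem_psetN]
    constructor
    · intro x hx
      have hx1 := (Finset.mem_sdiff.1 hx).1
      rw [List.mem_toFinset] at hx1
      exact hmemA x (List.take_subset _ _ hx1)
    · rw [hwin]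
      rw [Finset.card_sdiff_of_subset (hsubtake i), htfcard _ (by omega), htfcard _ (by omega)]
      omega
  have hwinsum : ∀ i, (win i).sum id + T i = T (n + i) := by
    intro i
    rw [hwin]
    have := Finset.sum_sdiff (f := id) (hsubtake i)
    rw [htfsum, htfsum] at this
    exact this
  -- step
  have hstep : ∀ k, (hk : k < 2 * n) → T (k + 1) = T k + l[k]'(by omega) := by
    intro k hk
    rw [hT]
    exact List.sum_take_succ _ _ _
  have hbounds : ∀ k, (hk : k < 2 * n) → 1 ≤ l[k]'(by omega) ∧ l[k]'(by omega) ≤ M := by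
    intro k hk
    have hmem : l[k]'(by omega) ∈ A := hmemA _ (List.getElem_mem _)
    exact ⟨hpos _ hmem, hMmax _ hmem⟩
  have hwstep : ∀ i, (hi : i < n) → (win (i + 1)).sum id + l[i]'(by omega) =
      (win i).sum id + l[n + i]'(by omega) := by
    intro i hi
    have h1 := hwinsum i
    have h2 := hwinsum (i + 1)
    have h3 := hstep i (by omega)
    have h4 : n + (i + 1) = (n + i) + 1 := by omega
    rw [h4] at h2
    have h5 := hstep (n + i) (by omega)
    omega
  -- monotone: ws 0 ≤ ws i
  have hmono : ∀ i, i ≤ n → (win 0).sum id ≤ (win i).sum id := by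
    intro i
    induction i with
    | zero => intro _; exact le_refl _
    | succ j ih =>
      intro hj
      have h1 := ih (by omega)
      have h2 := hwstep j (by omega)
      have hle : l[j]'(by omega) ≤ l[n + j]'(by omega) := by
        apply hsorted.rel_get_of_lt
        simp only [Fin.mk_lt_mk]
        omega
      omega
  have hends : (win 0).sum id + (win n).sum id = S := by
    have h1 := hwinsum 0
    have h2 := hwinsum n
    have hT0 : T 0 = 0 := by rw [hT]; simp
    have hT2n : T (n + n) = S := by
      have h : l.take (n + n) = l := List.take_of_length_le (by omega)
      simp only [hT, h, hlsum]
    have hTn : T (n + 0) = T n := by norm_num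
    omega
  -- endpoints
  have hw0 : 2 * (win 0).sum id < S := by
    have := hmono n (le_refl n)
    have hne := hnohalf _ (hwinmem 0 (by omega))
    omega
  have hP0 : 3 * (win 0).sum id ≤ S :=
    three_le_of_dvd (hlowdiv _ (hwinmem 0 (by omega)) hw0) hSpos hw0
  have hPn : ¬ 3 * (win n).sum id ≤ S := by
    intro h
    have := hends
    omega
  obtain ⟨i, hilt, hPi, hPsi⟩ := cross_ex (fun i => 3 * (win i).sum id ≤ S) hP0 hPn
  have hmidi := hmid _ (hwinmem (i + 1) (by omega))
  have h2S : 2 * S ≤ 3 * (win (i + 1)).sum id := by tauto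
  have hstepi := hwstep i hilt
  have hbi := hbounds i (by omega)
  have hbni := hbounds (n + i) (by omega)
  omega





lemma good_t {σ t : ℕ} (hσ : 0 < σ) (ht : t < σ) (h3 : 2 * σ < 3 * t) : ¬ t ∣ 2 * σ := by
  rintro ⟨k, hk⟩
  rcases Nat.lt_or_ge k 3 with h | h
  · interval_cases k <;> omega
  · have : t * 3 ≤ t * k := Nat.mul_le_mul_left _ h
    omega

lemma bad_eq {σ t : ℕ} (hσ : 0 < σ) (ht : t < σ) (h2 : σ < 2 * t) (hdvd : t ∣ 2 * σ) :
    3 * t = 2 * σ := by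
  obtain ⟨k, hk⟩ := hdvd
  rcases Nat.lt_or_ge k 4 with h | h
  · interval_cases k <;> omega
  · have : t * 4 ≤ t * k := Nat.mul_le_mul_left _ h
    omega

lemma card3 {G1 G2 : Finset (ℕ × ℕ)} {p q r : ℕ × ℕ} (hpq : p ≠ q) (hpr : p ≠ r) (hqr : q ≠ r)
    (hp : p ∈ G1 ∨ p ∈ G2) (hq : q ∈ G1 ∨ q ∈ G2) (hr : r ∈ G1 ∨ r ∈ G2) :
    3 ≤ G1.card + G2.card := by
  classical
  set s : Finset (ℕ × ℕ) := {p, q, r} with hs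
  have hscard : s.card = 3 := by
    rw [hs, Finset.card_insert_of_notMem (by simp [hpq, hpr]),
      Finset.card_insert_of_notMem (by simp [hqr]), Finset.card_singleton]
  have h1 : s.filter (· ∈ G1) ⊆ G1 := fun x hx => (Finset.mem_filter.1 hx).2
  have h2 : s.filter (¬ · ∈ G1) ⊆ G2 := by
    intro x hx
    obtain ⟨hxs, hxn⟩ := Finset.mem_filter.1 hx
    have : x = p ∨ x = q ∨ x = r := by simpa [hs] using hxs
    rcases this with rfl | rfl | rfl <;> tauto
  have h3 := Finset.card_filter_add_card_filter_not (s := s) (p := (· ∈ G1))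
  have c1 := Finset.card_le_card h1
  have c2 := Finset.card_le_card h2
  omega

lemma lemC_core {X Y : Finset ℕ} {n σ : ℕ} (hn : 3 ≤ n)
    (hXcard : X.card = n) (hYcard : Y.card = n)
    (hdisj : ∀ x, x ∈ X → x ∈ Y → False)
    (hXs : ∑ x ∈ X, x = σ) (hYs : ∑ x ∈ Y, x = σ) (hσpos : 0 < σ)
    (G1 G2 : Finset (ℕ × ℕ))
    (hG1 : ∀ u v, u ∈ X → v ∈ Y → v < u → ¬ ((σ + v) - u) ∣ 2 * σ → (u, v) ∈ G1)
    (hG2 : ∀ u v, u ∈ Y → v ∈ X → v < u → ¬ ((σ + v) - u) ∣ 2 * σ → (u, v) ∈ G2) :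
    n ≤ G1.card + G2.card := by
  classical
  have hXle : ∀ x ∈ X, x ≤ σ := fun x hx =>
    hXs ▸ Finset.single_le_sum (f := fun i => i) (fun i _ => Nat.zero_le i) hx
  have hYle : ∀ y ∈ Y, y ≤ σ := fun y hy =>
    hYs ▸ Finset.single_le_sum (f := fun i => i) (fun i _ => Nat.zero_le i) hy
  set SX := X.filter (fun x => 3 * x < σ) with hSX
  set BX := X.filter (fun x => σ ≤ 3 * x) with hBX
  set SY := Y.filter (fun x => 3 * x < σ) with hSY
  set BY := Y.filter (fun x => σ ≤ 3 * x) with hBY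
  have hXsplit : SX.card + BX.card = n := by
    have h := Finset.card_filter_add_card_filter_not (s := X) (p := fun x => 3 * x < σ)
    have he : X.filter (fun x => ¬ 3 * x < σ) = BX := by
      rw [hBX]; apply Finset.filter_congr; intro x _; omega
    rw [he] at h
    rw [hSX]
    omega
  have hYsplit : SY.card + BY.card = n := by
    have h := Finset.card_filter_add_card_filter_not (s := Y) (p := fun x => 3 * x < σ)
    have he : Y.filter (fun x => ¬ 3 * x < σ) = BY := by
      rw [hBY]; apply Finset.filter_congr; intro x _; omega
    rw [he] at h
    rw [hSY]
    omega
  have hbig2 : ∀ Z : Finset ℕ, (∑ x ∈ Z, x) = σ → (Z.filter (fun x => σ ≤ 3 * x)).card ≤ 2 := by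
    intro Z hZ
    by_contra hcon
    push_neg at hcon
    obtain ⟨a, b, c, ha, hb, hc, hab, hac, hbc⟩ := Finset.two_lt_card_iff.1 hcon
    obtain ⟨haZ, ha3⟩ := Finset.mem_filter.1 ha
    obtain ⟨hbZ, hb3⟩ := Finset.mem_filter.1 hb
    obtain ⟨hcZ, hc3⟩ := Finset.mem_filter.1 hc
    have hsub : ({a, b, c} : Finset ℕ) ⊆ Z := by
      intro x hx
      simp only [Finset.mem_insert, Finset.mem_singleton] at hx
      rcases hx with rfl | rfl | rfl <;> assumption
    have hsum : (∑ x ∈ ({a, b, c} : Finset ℕ), x) = a + b + c := by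
      rw [Finset.sum_insert (by simp [hab, hac]), Finset.sum_insert (by simp [hbc]),
        Finset.sum_singleton]
      ring
    have hle : (∑ x ∈ ({a, b, c} : Finset ℕ), x) ≤ σ := by
      rw [← hZ]
      exact Finset.sum_le_sum_of_subset hsub
    omega
  have hBX2 : BX.card ≤ 2 := hbig2 X hXs
  have hBY2 : BY.card ≤ 2 := hbig2 Y hYs
  -- goodness producers with gap hypothesis
  have hg1 : ∀ u v, u ∈ X → v ∈ Y → v < u → 3 * u < σ + 3 * v → (u, v) ∈ G1 := by
    intro u v hu hv hvu hgap
    have huσ := hXle u hu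
    exact hG1 u v hu hv hvu (good_t hσpos (by omega) (by omega))
  have hg2 : ∀ u v, u ∈ Y → v ∈ X → v < u → 3 * u < σ + 3 * v → (u, v) ∈ G2 := by
    intro u v hu hv hvu hgap
    have huσ := hYle u hu
    exact hG2 u v hu hv hvu (good_t hσpos (by omega) (by omega))
  have ss_good : ∀ a ∈ SX, ∀ b ∈ SY, ∃ p : ℕ × ℕ,
      (p ∈ G1 ∨ p ∈ G2) ∧ (p = (a, b) ∨ p = (b, a)) := by
    intro a ha b hb
    obtain ⟨haX, ha3⟩ := Finset.mem_filter.1 ha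
    obtain ⟨hbY, hb3⟩ := Finset.mem_filter.1 hb
    have hab : a ≠ b := fun h => hdisj a haX (h ▸ hbY)
    rcases Nat.lt_or_ge b a with h | h
    · exact ⟨(a, b), Or.inl (hg1 a b haX hbY h (by omega)), Or.inl rfl⟩
    · have h' : a < b := by omega
      exact ⟨(b, a), Or.inr (hg2 b a hbY haX h' (by omega)), Or.inr rfl⟩
  have pair_ne : ∀ (a b c d : ℕ) (p q : ℕ × ℕ), a ∈ X → b ∈ Y → c ∈ X → d ∈ Y →
      (a ≠ c ∨ b ≠ d) →
      (p = (a, b) ∨ p = (b, a)) → (q = (c, d) ∨ q = (d, c)) → p ≠ q := by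
    intro a b c d p q haX hbY hcX hdY hne hp hq
    rcases hp with rfl | rfl <;> rcases hq with rfl | rfl <;>
        intro h <;> rw [Prod.mk.injEq] at h
    · exact hne.elim (fun hh => hh h.1) (fun hh => hh h.2)
    · exact hdisj a haX (h.1 ▸ hdY)
    · exact hdisj c hcX (h.1 ▸ hbY)
    · exact hne.elim (fun hh => hh h.2) (fun hh => hh h.1)
  by_cases hcase : 2 ≤ SX.card ∧ 2 ≤ SY.card
  · -- the product of smalls is big enough
    obtain ⟨hsx2, hsy2⟩ := hcase
    have hP1 : (SX ×ˢ SY).filter (fun p => p.2 < p.1) ⊆ G1 := by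
      intro p hp
      obtain ⟨hpP, hplt⟩ := Finset.mem_filter.1 hp
      obtain ⟨hp1, hp2⟩ := Finset.mem_product.1 hpP
      obtain ⟨h1X, h13⟩ := Finset.mem_filter.1 hp1
      obtain ⟨h2Y, h23⟩ := Finset.mem_filter.1 hp2
      have : (p.1, p.2) ∈ G1 := hg1 p.1 p.2 h1X h2Y hplt (by omega)
      simpa using this
    have hP2 : ((SX ×ˢ SY).filter (fun p => ¬ p.2 < p.1)).image Prod.swap ⊆ G2 := by
      intro q hq
      obtain ⟨p, hp, hpq⟩ := Finset.mem_image.1 hq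
      obtain ⟨hpP, hplt⟩ := Finset.mem_filter.1 hp
      obtain ⟨hp1, hp2⟩ := Finset.mem_product.1 hpP
      obtain ⟨h1X, h13⟩ := Finset.mem_filter.1 hp1
      obtain ⟨h2Y, h23⟩ := Finset.mem_filter.1 hp2
      have hne : p.1 ≠ p.2 := fun h => hdisj p.1 h1X (h ▸ h2Y)
      have hlt : p.1 < p.2 := by omega
      have : (p.2, p.1) ∈ G2 := hg2 p.2 p.1 h2Y h1X hlt (by omega)
      rw [← hpq]
      simpa [Prod.swap] using this
    have hc1 := Finset.card_le_card hP1
    have hc2 := Finset.card_le_card hP2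
    rw [Finset.card_image_of_injective _ Prod.swap_injective] at hc2
    have hsplit := Finset.card_filter_add_card_filter_not
      (s := SX ×ˢ SY) (p := fun p => p.2 < p.1)
    rw [Finset.card_product] at hsplit
    -- n ≤ SX.card * SY.card
    have hprod : n ≤ SX.card * SY.card := by
      rcases Nat.lt_or_ge n 5 with h | h
      · have h4 : 2 * 2 ≤ SX.card * SY.card := Nat.mul_le_mul hsx2 hsy2
        omega
      · have h1 : n - 2 ≤ SX.card := by omega
        have h2 : n - 2 ≤ SY.card := by omega
        have h3 : 3 * (n - 2) ≤ (n - 2) * (n - 2) :=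
          Nat.mul_le_mul_right _ (by omega)
        have h5 : (n - 2) * (n - 2) ≤ SX.card * SY.card := Nat.mul_le_mul h1 h2
        omega
    omega
  · -- n = 3 special cases
    have hn3 : n = 3 := by omega
    subst hn3
    push_neg at hcase
    -- helper to extract two bigs
    have btwo : ∀ Z : Finset ℕ, (∑ x ∈ Z, x) = σ → Z.card = 3 →
        (Z.filter (fun x => 3 * x < σ)).card = 1 →
        ∃ z1 z2 z3, (Z.filter (fun x => 3 * x < σ)) = {z1} ∧ z2 < z3 ∧
          (Z.filter (fun x => σ ≤ 3 * x)) = {z2, z3} ∧ 2 * z2 < σ ∧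
          z1 + (z2 + z3) = σ ∧ 3 * z1 < σ ∧ σ ≤ 3 * z2 ∧ σ ≤ 3 * z3 ∧
          z1 ∈ Z ∧ z2 ∈ Z ∧ z3 ∈ Z := by
      intro Z hZs hZc hZ1
      obtain ⟨z1, hz1⟩ := Finset.card_eq_one.1 hZ1
      have hBc : (Z.filter (fun x => σ ≤ 3 * x)).card = 2 := by
        have h := Finset.card_filter_add_card_filter_not (s := Z)
          (p := fun x => 3 * x < σ)
        have he : Z.filter (fun x => ¬ 3 * x < σ) = Z.filter (fun x => σ ≤ 3 * x) := by
          apply Finset.filter_congr; intro x _; omega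
        rw [he] at h
        omega
      obtain ⟨a, b, hab, hB⟩ := Finset.card_eq_two.1 hBc
      have haB : a ∈ Z.filter (fun x => σ ≤ 3 * x) := by rw [hB]; simp
      have hbB : b ∈ Z.filter (fun x => σ ≤ 3 * x) := by rw [hB]; simp
      obtain ⟨haZ, ha3⟩ := Finset.mem_filter.1 haB
      obtain ⟨hbZ, hb3⟩ := Finset.mem_filter.1 hbB
      have hz1m : z1 ∈ Z.filter (fun x => 3 * x < σ) := by rw [hz1]; simp
      obtain ⟨hz1Z, hz13⟩ := Finset.mem_filter.1 hz1m
      have hsum : z1 + (a + b) = σ := by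
        have h := Finset.sum_filter_add_sum_filter_not Z (fun x => 3 * x < σ) (fun x => x)
        have he : Z.filter (fun x => ¬ 3 * x < σ) = Z.filter (fun x => σ ≤ 3 * x) := by
          apply Finset.filter_congr; intro x _; omega
        rw [he, hz1, hB, Finset.sum_singleton, Finset.sum_insert (by simp [hab]),
          Finset.sum_singleton, hZs] at h
        omega
      rcases Nat.lt_or_ge a b with h | h
      · exact ⟨z1, a, b, hz1, h, hB, by omega, by omega, hz13, ha3, hb3, hz1Z, haZ, hbZ⟩
      · have h' : b < a := by omega
        refine ⟨z1, b, a, hz1, h', ?_, by omega, by omega, hz13, hb3, ha3, hz1Z, hbZ, haZ⟩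
        rw [hB, Finset.pair_comm]
    -- at least one big per side
    have hbig1 : ∀ Z : Finset ℕ, (∑ x ∈ Z, x) = σ → Z.card = 3 →
        1 ≤ (Z.filter (fun x => σ ≤ 3 * x)).card := by
      intro Z hZs hZc
      by_contra hcon
      push_neg at hcon
      have hemp : Z.filter (fun x => σ ≤ 3 * x) = ∅ := by
        rw [← Finset.card_eq_zero]; omega
      have hall : ∀ x ∈ Z, 3 * x < σ := by
        intro x hx
        by_contra hc
        have : x ∈ Z.filter (fun x => σ ≤ 3 * x) := Finset.mem_filter.2 ⟨hx, by omega⟩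
        rw [hemp] at this
        exact absurd this (Finset.notMem_empty x)
      have hne : Z.Nonempty := by rw [← Finset.card_pos]; omega
      have hlt : ∑ x ∈ Z, 3 * x < ∑ _x ∈ Z, σ :=
        Finset.sum_lt_sum_of_nonempty hne hall
      rw [Finset.sum_const, ← Finset.mul_sum, hZs, hZc, smul_eq_mul] at hlt
      omega
    have hsx1 : 1 ≤ SX.card := by
      have := hbig1 X hXs hXcard
      rw [← hBX] at this
      omega
    have hsy1 : 1 ≤ SY.card := by
      have := hbig1 Y hYs hYcard
      rw [← hBY] at this
      omega
    by_cases hx1 : SX.card = 1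
    · obtain ⟨x1, x2, x3, hSXeq, hx23, hBXeq, h2x2, hXsum, hx13, hx23s, hx33s,
        hx1X, hx2X, hx3X⟩ := btwo X hXs hXcard (hSX ▸ hx1)
      have hx1SX : x1 ∈ SX := by rw [hSX, hSXeq]; simp
      have hx1x2 : x1 ≠ x2 := by omega
      by_cases hy1 : SY.card = 1
      · -- subcase C : both sides have two bigs
        obtain ⟨y1, y2, y3, hSYeq, hy23, hBYeq, h2y2, hYsum, hy13, hy23s, hy33s,
          hy1Y, hy2Y, hy3Y⟩ := btwo Y hYs hYcard (hSY ▸ hy1)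
        have hy1SY : y1 ∈ SY := by rw [hSY, hSYeq]; simp
        have hy1y2 : y1 ≠ y2 := by omega
        obtain ⟨p1, hp1, ht1⟩ := ss_good x1 hx1SX y1 hy1SY
        -- p2 : the pair (x2, y2) in suitable order
        have hx2y2 : x2 ≠ y2 := fun h => hdisj x2 hx2X (h ▸ hy2Y)
        have hp2 : ∃ p2 : ℕ × ℕ, (p2 ∈ G1 ∨ p2 ∈ G2) ∧ (p2 = (x2, y2) ∨ p2 = (y2, x2)) := by
          rcases Nat.lt_or_ge y2 x2 with h | h
          · exact ⟨(x2, y2), Or.inl (hg1 x2 y2 hx2X hy2Y h (by omega)), Or.inl rfl⟩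
          · have h' : x2 < y2 := by omega
            exact ⟨(y2, x2), Or.inr (hg2 y2 x2 hy2Y hx2X h' (by omega)), Or.inr rfl⟩
        obtain ⟨p2, hp2m, ht2⟩ := hp2
        -- p3 : one of (x2, y1), (y2, x1)
        have hy1x2 : y1 < x2 := by omega
        have hx1y2 : x1 < y2 := by omega
        have hx2σ : x2 ≤ σ := hXle x2 hx2X
        have hy2σ : y2 ≤ σ := hYle y2 hy2Y
        have hp3 : ∃ p3 : ℕ × ℕ, (p3 ∈ G1 ∨ p3 ∈ G2) ∧
            (p3 = (x2, y1) ∨ p3 = (y2, x1)) := by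
          by_cases hb1 : ((σ + y1) - x2) ∣ 2 * σ
          · by_cases hb2 : ((σ + x1) - y2) ∣ 2 * σ
            · exfalso
              have e1 : 3 * ((σ + y1) - x2) = 2 * σ :=
                bad_eq hσpos (by omega) (by omega) hb1
              have e2 : 3 * ((σ + x1) - y2) = 2 * σ :=
                bad_eq hσpos (by omega) (by omega) hb2
              have hx3y3 : x3 = y3 := by omega
              exact hdisj x3 hx3X (hx3y3 ▸ hy3Y)
            · exact ⟨(y2, x1), Or.inr (hG2 y2 x1 hy2Y hx1X hx1y2 hb2), Or.inr rfl⟩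
          · exact ⟨(x2, y1), Or.inl (hG1 x2 y1 hx2X hy1Y hy1x2 hb1), Or.inl rfl⟩
        obtain ⟨p3, hp3m, ht3⟩ := hp3
        have hne12 : p1 ≠ p2 := pair_ne x1 y1 x2 y2 p1 p2 hx1X hy1Y hx2X hy2Y
          (Or.inl hx1x2) ht1 ht2
        have hne13 : p1 ≠ p3 := by
          rcases ht3 with h3 | h3
          · exact pair_ne x1 y1 x2 y1 p1 p3 hx1X hy1Y hx2X hy1Y (Or.inl hx1x2) ht1
              (Or.inl h3)
          · exact pair_ne x1 y1 x1 y2 p1 p3 hx1X hy1Y hx1X hy2Y (Or.inr hy1y2) ht1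
              (Or.inr h3)
        have hne23 : p2 ≠ p3 := by
          rcases ht3 with h3 | h3
          · exact pair_ne x2 y2 x2 y1 p2 p3 hx2X hy2Y hx2X hy1Y (Or.inr (Ne.symm hy1y2))
              ht2 (Or.inl h3)
          · exact pair_ne x2 y2 x1 y2 p2 p3 hx2X hy2Y hx1X hy2Y (Or.inl (Ne.symm hx1x2))
              ht2 (Or.inr h3)
        exact card3 hne12 hne13 hne23 hp1 hp2m hp3m
      · -- subcase A : X has two bigs, Y has two smalls
        have hsy2 : SY.card = 2 := by
          have := hbig1 Y hYs hYcard
          rw [← hBY] at this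
          omega
        obtain ⟨c, d, hcd, hSYeq⟩ := Finset.card_eq_two.1 hsy2
        have hcSY : c ∈ SY := by rw [hSYeq]; simp
        have hdSY : d ∈ SY := by rw [hSYeq]; simp
        obtain ⟨hcY, hc3⟩ := Finset.mem_filter.1 (hSY ▸ hcSY)
        obtain ⟨hdY, hd3⟩ := Finset.mem_filter.1 (hSY ▸ hdSY)
        obtain ⟨p1, hp1, ht1⟩ := ss_good x1 hx1SX c hcSY
        obtain ⟨p2, hp2m, ht2⟩ := ss_good x1 hx1SX d hdSY
        have hcx2 : c < x2 := by omega
        have hdx2 : d < x2 := by omega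
        have hx2σ : x2 ≤ σ := hXle x2 hx2X
        have hp3 : ∃ y, (y = c ∨ y = d) ∧ (x2, y) ∈ G1 := by
          by_cases hb1 : ((σ + c) - x2) ∣ 2 * σ
          · by_cases hb2 : ((σ + d) - x2) ∣ 2 * σ
            · exfalso
              have e1 : 3 * ((σ + c) - x2) = 2 * σ :=
                bad_eq hσpos (by omega) (by omega) hb1
              have e2 : 3 * ((σ + d) - x2) = 2 * σ :=
                bad_eq hσpos (by omega) (by omega) hb2
              exact hcd (by omega)
            · exact ⟨d, Or.inr rfl, hG1 x2 d hx2X hdY hdx2 hb2⟩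
          · exact ⟨c, Or.inl rfl, hG1 x2 c hx2X hcY hcx2 hb1⟩
        obtain ⟨y, hy, hp3m⟩ := hp3
        have hyY : y ∈ Y := by rcases hy with rfl | rfl <;> assumption
        have hne12 : p1 ≠ p2 := pair_ne x1 c x1 d p1 p2 hx1X hcY hx1X hdY
          (Or.inr hcd) ht1 ht2
        have hne13 : p1 ≠ (x2, y) := pair_ne x1 c x2 y p1 (x2, y) hx1X hcY hx2X hyY
          (Or.inl hx1x2) ht1 (Or.inl rfl)
        have hne23 : p2 ≠ (x2, y) := pair_ne x1 d x2 y p2 (x2, y) hx1X hdY hx2X hyY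
          (Or.inl hx1x2) ht2 (Or.inl rfl)
        exact card3 hne12 hne13 hne23 hp1 hp2m (Or.inl hp3m)
    · -- SX.card ≥ 2, so SY.card = 1 : mirror of subcase A
      have hsx2' : 2 ≤ SX.card := by omega
      have hsy : SY.card = 1 := by
        have := hcase hsx2'
        omega
      obtain ⟨y1, y2, y3, hSYeq, hy23, hBYeq, h2y2, hYsum, hy13, hy23s, hy33s,
        hy1Y, hy2Y, hy3Y⟩ := btwo Y hYs hYcard (hSY ▸ hsy)
      have hy1SY : y1 ∈ SY := by rw [hSY, hSYeq]; simp
      have hsx2 : SX.card = 2 := by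
        have := hbig1 X hXs hXcard
        rw [← hBX] at this
        omega
      obtain ⟨c, d, hcd, hSXeq⟩ := Finset.card_eq_two.1 hsx2
      have hcSX : c ∈ SX := by rw [hSXeq]; simp
      have hdSX : d ∈ SX := by rw [hSXeq]; simp
      obtain ⟨hcX, hc3⟩ := Finset.mem_filter.1 (hSX ▸ hcSX)
      obtain ⟨hdX, hd3⟩ := Finset.mem_filter.1 (hSX ▸ hdSX)
      obtain ⟨p1, hp1, ht1⟩ := ss_good c hcSX y1 hy1SY
      obtain ⟨p2, hp2m, ht2⟩ := ss_good d hdSX y1 hy1SY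
      have hcy2 : c < y2 := by omega
      have hdy2 : d < y2 := by omega
      have hy2σ : y2 ≤ σ := hYle y2 hy2Y
      have hp3 : ∃ x, (x = c ∨ x = d) ∧ (y2, x) ∈ G2 := by
        by_cases hb1 : ((σ + c) - y2) ∣ 2 * σ
        · by_cases hb2 : ((σ + d) - y2) ∣ 2 * σ
          · exfalso
            have e1 : 3 * ((σ + c) - y2) = 2 * σ :=
              bad_eq hσpos (by omega) (by omega) hb1
            have e2 : 3 * ((σ + d) - y2) = 2 * σ :=
              bad_eq hσpos (by omega) (by omega) hb2
            exact hcd (by omega)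
          · exact ⟨d, Or.inr rfl, hG2 y2 d hy2Y hdX hdy2 hb2⟩
        · exact ⟨c, Or.inl rfl, hG2 y2 c hy2Y hcX hcy2 hb1⟩
      obtain ⟨x, hx, hp3m⟩ := hp3
      have hxX : x ∈ X := by rcases hx with rfl | rfl <;> assumption
      have hy1y2 : y1 ≠ y2 := by omega
      have hne12 : p1 ≠ p2 := pair_ne c y1 d y1 p1 p2 hcX hy1Y hdX hy1Y
        (Or.inl hcd) ht1 ht2
      have hne13 : p1 ≠ (y2, x) := pair_ne c y1 x y2 p1 (y2, x) hcX hy1Y hxX hy2Y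
        (Or.inr hy1y2) ht1 (Or.inr rfl)
      have hne23 : p2 ≠ (y2, x) := pair_ne d y1 x y2 p2 (y2, x) hdX hy1Y hxX hy2Y
        (Or.inr hy1y2) ht2 (Or.inr rfl)
      exact card3 hne12 hne13 hne23 hp1 hp2m (Or.inr hp3m)


lemma lemC {A H : Finset ℕ} {n : ℕ} (hn : 3 ≤ n) (hA : A.card = 2 * n)
    (hpos : ∀ a ∈ A, 0 < a) (hH : H ∈ halfS A n) :
    n ≤ (goodsH A H).card + (goodsH A (A \ H)).card := by
  classical
  obtain ⟨hHP, hHsum⟩ := Finset.mem_filter.1 hH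
  obtain ⟨hXsub, hXcard⟩ := mem_psetN.1 hHP
  have hsd : ∑ x ∈ A \ H, id x + ∑ x ∈ H, id x = ∑ x ∈ A, id x :=
    Finset.sum_sdiff (f := id) hXsub
  simp only [id_eq] at hsd
  have hHsum' : 2 * ∑ x ∈ H, x = ∑ x ∈ A, x := by
    simpa [id_eq, Function.id_def] using hHsum
  have hYX : A \ (A \ H) = H := Finset.sdiff_sdiff_eq_self hXsub
  have hYcard : (A \ H).card = n := by
    rw [Finset.card_sdiff_of_subset hXsub, hA, hXcard]; omega
  have hσpos : 0 < ∑ x ∈ H, x := by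
    apply Finset.sum_pos
    · intro i hi; exact hpos i (hXsub hi)
    · rw [← Finset.card_pos, hXcard]; omega
  refine lemC_core (σ := ∑ x ∈ H, x) hn hXcard hYcard
    (fun x hx hy => (Finset.mem_sdiff.1 hy).2 hx) rfl (by omega) hσpos
    (goodsH A H) (goodsH A (A \ H)) ?_ ?_
  · intro u v hu hv hvu hgood
    rw [goodsH, Finset.mem_filter, Finset.mem_product]
    refine ⟨⟨hu, hv⟩, hvu, ?_⟩
    have he : (H.sum id + v) - u = ((∑ x ∈ H, x) + v) - u := by
      simp [Function.id_def]
    rw [he]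
    intro hdvd
    apply hgood
    have : A.sum id = 2 * ∑ x ∈ H, x := by
      simp only [Function.id_def]
      omega
    rwa [this] at hdvd
  · intro u v hu hv hvu hgood
    rw [goodsH, Finset.mem_filter, Finset.mem_product, hYX]
    refine ⟨⟨hu, hv⟩, hvu, ?_⟩
    have hYsum : (A \ H).sum id = ∑ x ∈ H, x := by
      simp only [Function.id_def]
      omega
    rw [hYsum]
    intro hdvd
    apply hgood
    have : A.sum id = 2 * ∑ x ∈ H, x := by
      simp only [Function.id_def]
      omega
    rwa [this] at hdvd








lemma compl_mem_psetN' {A B : Finset ℕ} {n : ℕ} (hA : A.card = 2 * n) (hB : B ∈ psetN A n) :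
    (A \ B) ∈ psetN A n := by
  rw [mem_psetN] at hB ⊢
  refine ⟨Finset.sdiff_subset, ?_⟩
  rw [Finset.card_sdiff_of_subset hB.1, hA, hB.2]; omega

lemma compl_mem_halfS {A B : Finset ℕ} {n : ℕ} (hA : A.card = 2 * n) (hB : B ∈ halfS A n) :
    (A \ B) ∈ halfS A n := by
  rw [halfS, Finset.mem_filter] at hB ⊢
  have hsum : (A \ B).sum id + B.sum id = A.sum id := Finset.sum_sdiff (mem_psetN.1 hB.1).1
  exact ⟨compl_mem_psetN' hA hB.1, by omega⟩

/-- pairing: half sets containing M are half of all half sets -/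
lemma half_card_eq_two_HA {A : Finset ℕ} {n : ℕ} {M : ℕ} (hA : A.card = 2 * n) (hM : M ∈ A) :
    (halfS A n).card = 2 * ((halfS A n).filter (fun B => M ∈ B)).card := by
  have h1 := Finset.card_filter_add_card_filter_not
    (s := halfS A n) (p := fun B => M ∈ B)
  have h2 : ((halfS A n).filter (fun B => ¬ M ∈ B)).card
      = ((halfS A n).filter (fun B => M ∈ B)).card := by
    apply Finset.card_bij (fun B _ => A \ B)
    · intro B hB
      rw [Finset.mem_filter] at hB ⊢
      exact ⟨compl_mem_halfS hA hB.1, Finset.mem_sdiff.2 ⟨hM, hB.2⟩⟩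
    · intro B hB C hC h
      rw [Finset.mem_filter] at hB hC
      rw [← Finset.sdiff_sdiff_eq_self (mem_psetN.1 (Finset.mem_filter.1 hB.1).1).1, h,
        Finset.sdiff_sdiff_eq_self (mem_psetN.1 (Finset.mem_filter.1 hC.1).1).1]
    · intro C hC
      rw [Finset.mem_filter] at hC
      have hsub := (mem_psetN.1 (Finset.mem_filter.1 hC.1).1).1
      refine ⟨A \ C, ?_, Finset.sdiff_sdiff_eq_self hsub⟩
      rw [Finset.mem_filter]
      refine ⟨compl_mem_halfS hA hC.1, ?_⟩
      intro h
      exact (Finset.mem_sdiff.1 h).2 hC.2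
  omega

/-- in-degree bound -/
lemma indeg_le {A N : Finset ℕ} {n : ℕ} (hn : 3 ≤ n) (hA : A.card = 2 * n)
    (hN : N ∈ phiS A n) :
    (N.filter (fun v => ∃ u ∈ A, u ∉ N ∧ 2 * (N.sum id + u) = A.sum id + 2 * v)).card ≤ n - 1 := by
  by_contra hcon
  push_neg at hcon
  obtain ⟨⟨hNP, hlow⟩, -⟩ : (N ∈ psetN A n ∧ 2 * N.sum id < A.sum id) ∧ _ := by
    rw [phiS, Finset.mem_filter, lowS, Finset.mem_filter] at hN; exact hN
  obtain ⟨hsub, hcard⟩ := mem_psetN.1 hNP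
  have hfall : N.filter (fun v => ∃ u ∈ A, u ∉ N ∧ 2 * (N.sum id + u) = A.sum id + 2 * v) = N := by
    apply Finset.eq_of_subset_of_card_le (Finset.filter_subset _ _)
    omega
  have hall : ∀ v ∈ N, ∃ u ∈ A, u ∉ N ∧ 2 * (N.sum id + u) = A.sum id + 2 * v := by
    intro v hv
    have : v ∈ N.filter (fun v => ∃ u ∈ A, u ∉ N ∧ 2 * (N.sum id + u) = A.sum id + 2 * v) := by
      rw [hfall]; exact hv
    exact (Finset.mem_filter.1 this).2
  have hNne : N.Nonempty := by rw [← Finset.card_pos]; omega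
  obtain ⟨v₀, hv₀⟩ := hNne
  obtain ⟨u₀, hu₀A, hu₀N, hu₀e⟩ := hall v₀ hv₀
  set d := u₀ - v₀ with hd
  have hdpos : 0 < d := by omega
  have hkey : ∀ v ∈ N, v + d ∈ A \ N := by
    intro v hv
    obtain ⟨u, huA, huN, hue⟩ := hall v hv
    have : u = v + d := by omega
    rw [← this]; exact Finset.mem_sdiff.2 ⟨huA, huN⟩
  have himg : N.image (fun v => v + d) = A \ N := by
    apply Finset.eq_of_subset_of_card_le
    · intro x hx
      obtain ⟨v, hv, hvx⟩ := Finset.mem_image.1 hx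
      rw [← hvx]; exact hkey v hv
    · rw [Finset.card_sdiff_of_subset hsub, hA, hcard,
        Finset.card_image_of_injective _ (add_left_injective d), hcard]
      omega
  have hsum1 : (A \ N).sum id + N.sum id = A.sum id := Finset.sum_sdiff hsub
  have hsum2 : (A \ N).sum id = N.sum id + n * d := by
    rw [← himg, Finset.sum_image (by intro x _ y _ h; exact add_right_cancel h)]
    simp only [id]
    rw [Finset.sum_add_distrib, Finset.sum_const, hcard, smul_eq_mul]
  have hnd : n * d = 2 * d := by omega
  have : n = 2 := Nat.eq_of_mul_eq_mul_right hdpos hnd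
  omega


lemma goodsH_target {A H : Finset ℕ} {n : ℕ} (hn : 3 ≤ n) (hA : A.card = 2 * n)
    (hH : H ∈ halfS A n) {p : ℕ × ℕ} (hp : p ∈ goodsH A H) :
    (insert p.2 (H.erase p.1)).sum id + p.1 = H.sum id + p.2 ∧
    insert p.2 (H.erase p.1) ∈ phiS A n ∧
    p.2 ∈ (insert p.2 (H.erase p.1)).filter
      (fun v => ∃ u ∈ A, u ∉ insert p.2 (H.erase p.1) ∧
        2 * ((insert p.2 (H.erase p.1)).sum id + u) = A.sum id + 2 * v) := by
  obtain ⟨hHP, hHsum⟩ := Finset.mem_filter.1 hH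
  obtain ⟨hHsub, hHcard⟩ := mem_psetN.1 hHP
  rw [goodsH, Finset.mem_filter, Finset.mem_product] at hp
  obtain ⟨⟨hu, hv⟩, hvu, hgood⟩ := hp
  obtain ⟨hvA, hvH⟩ := Finset.mem_sdiff.1 hv
  set u := p.1
  set v := p.2
  set N := insert v (H.erase u) with hN
  have hvnotin : v ∉ H.erase u := fun h => hvH (Finset.mem_of_mem_erase h)
  have hunotin : u ∉ N := by
    rw [hN, Finset.mem_insert]
    rintro (h | h)
    · omega
    · exact (Finset.notMem_erase u H) h
  have hNsum : N.sum id + u = H.sum id + v := by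
    rw [hN, Finset.sum_insert hvnotin]
    have := Finset.sum_erase_add H id hu
    simp only [id] at this ⊢
    omega
  have huleH : u ≤ H.sum id := Finset.single_le_sum (f := id) (fun i _ => Nat.zero_le i) hu
  have hNP : N ∈ psetN A n := by
    rw [mem_psetN]
    constructor
    · rw [hN]
      exact Finset.insert_subset hvA ((Finset.erase_subset u H).trans hHsub)
    · rw [hN, Finset.card_insert_of_notMem hvnotin, Finset.card_erase_of_mem hu, hHcard]
      omega
  have hNphi : N ∈ phiS A n := by
    rw [phiS, Finset.mem_filter, lowS, Finset.mem_filter]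
    refine ⟨⟨hNP, by omega⟩, ?_⟩
    have heq : (H.sum id + v) - u = N.sum id := by omega
    rw [← heq]
    exact hgood
  refine ⟨hNsum, hNphi, ?_⟩
  rw [Finset.mem_filter]
  refine ⟨Finset.mem_insert_self _ _, u, hHsub hu, hunotin, by omega⟩

/-- main incidence conclusion: no half sets -/
lemma half_empty {A : Finset ℕ} {n : ℕ} {M : ℕ} (hn : 3 ≤ n) (hA : A.card = 2 * n)
    (hpos : ∀ a ∈ A, 0 < a) (hM : M ∈ A)
    (hhp : (halfS A n).card = 2 * (phiS A n).card) :
    (halfS A n).card = 0 := by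
  classical
  set E := (halfS A n).sigma (fun H => goodsH A H) with hE
  set T := (phiS A n).sigma (fun N => N.filter
    (fun v => ∃ u ∈ A, u ∉ N ∧ 2 * (N.sum id + u) = A.sum id + 2 * v)) with hT
  -- injection
  have hinj : E.card ≤ T.card := by
    apply Finset.card_le_card_of_injOn
      (fun x => ⟨insert x.2.2 (x.1.erase x.2.1), x.2.2⟩)
    · intro x hx
      rw [Finset.mem_coe, hE, Finset.mem_sigma] at hx
      obtain ⟨h1, h2⟩ := hx
      obtain ⟨-, hphi, hfil⟩ := goodsH_target hn hA h1 h2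
      rw [Finset.mem_coe, hT, Finset.mem_sigma]
      exact ⟨hphi, hfil⟩
    · intro x hx y hy hxy
      have hx : x.1 ∈ halfS A n ∧ x.2 ∈ goodsH A x.1 := by
        have := Finset.mem_coe.1 hx
        rw [hE, Finset.mem_sigma] at this
        exact this
      have hy : y.1 ∈ halfS A n ∧ y.2 ∈ goodsH A y.1 := by
        have := Finset.mem_coe.1 hy
        rw [hE, Finset.mem_sigma] at this
        exact this
      obtain ⟨x1, xu, xv⟩ := x
      obtain ⟨y1, yu, yv⟩ := y
      have hNeq : insert xv (x1.erase xu) = insert yv (y1.erase yu) :=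
        congrArg (fun z => z.1) hxy
      have hveq : xv = yv := congrArg (fun (z : Σ _ : Finset ℕ, ℕ) => z.2) hxy
      obtain ⟨hsumx, -, -⟩ := goodsH_target hn hA hx.1 hx.2
      obtain ⟨hsumy, -, -⟩ := goodsH_target hn hA hy.1 hy.2
      have hx1sum := (Finset.mem_filter.1 hx.1).2
      have hy1sum := (Finset.mem_filter.1 hy.1).2
      simp only at hsumx hsumy hNeq hveq hx1sum hy1sum
      subst hveq
      rw [hNeq] at hsumx
      have hueq : xu = yu := by omega
      -- recover the half set
      rw [goodsH, Finset.mem_filter, Finset.mem_product] at hx hy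
      have hxuH : xu ∈ x1 := hx.2.1.1
      have hyuH : yu ∈ y1 := hy.2.1.1
      have hxvH : xv ∉ x1 := (Finset.mem_sdiff.1 hx.2.1.2).2
      have hyvH : xv ∉ y1 := (Finset.mem_sdiff.1 hy.2.1.2).2
      have hx1eq : x1 = insert xu ((insert xv (x1.erase xu)).erase xv) := by
        rw [Finset.erase_insert (fun h => hxvH (Finset.mem_of_mem_erase h)),
          Finset.insert_erase hxuH]
      have hy1eq : y1 = insert yu ((insert xv (y1.erase yu)).erase xv) := by
        rw [Finset.erase_insert (fun h => hyvH (Finset.mem_of_mem_erase h)),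
          Finset.insert_erase hyuH]
      have : x1 = y1 := by rw [hx1eq, hy1eq, hNeq, hueq]
      subst this
      subst hueq
      rfl
  -- lower bound on E.card
  have hElower : n * ((halfS A n).filter (fun B => M ∈ B)).card ≤ E.card := by
    rw [hE, Finset.card_sigma]
    have hsplit : ∑ H ∈ halfS A n, (goodsH A H).card
        = ∑ H ∈ (halfS A n).filter (fun B => M ∈ B), (goodsH A H).card
          + ∑ H ∈ (halfS A n).filter (fun B => ¬ M ∈ B), (goodsH A H).card :=
      (Finset.sum_filter_add_sum_filter_not _ _ _).symm
    have hbij : ∑ H ∈ (halfS A n).filter (fun B => ¬ M ∈ B), (goodsH A H).card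
        = ∑ H ∈ (halfS A n).filter (fun B => M ∈ B), (goodsH A (A \ H)).card := by
      apply Finset.sum_bij' (i := fun H _ => A \ H) (j := fun H _ => A \ H)
      · intro a ha
        rw [Finset.mem_filter] at ha ⊢
        exact ⟨compl_mem_halfS hA ha.1, Finset.mem_sdiff.2 ⟨hM, ha.2⟩⟩
      · intro a ha
        rw [Finset.mem_filter] at ha ⊢
        refine ⟨compl_mem_halfS hA ha.1, ?_⟩
        intro h
        exact (Finset.mem_sdiff.1 h).2 ha.2
      · intro a ha
        rw [Finset.mem_filter] at ha
        exact Finset.sdiff_sdiff_eq_self (mem_psetN.1 (Finset.mem_filter.1 ha.1).1).1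
      · intro a ha
        rw [Finset.mem_filter] at ha
        exact Finset.sdiff_sdiff_eq_self (mem_psetN.1 (Finset.mem_filter.1 ha.1).1).1
      · intro a ha
        rw [Finset.mem_filter] at ha
        rw [Finset.sdiff_sdiff_eq_self (mem_psetN.1 (Finset.mem_filter.1 ha.1).1).1]
    rw [hsplit, hbij, ← Finset.sum_add_distrib]
    calc n * ((halfS A n).filter (fun B => M ∈ B)).card
        = ∑ _H ∈ (halfS A n).filter (fun B => M ∈ B), n := by
          rw [Finset.sum_const, smul_eq_mul, mul_comm]
      _ ≤ _ := by
          apply Finset.sum_le_sum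
          intro H hH
          exact lemC hn hA hpos (Finset.mem_filter.1 hH).1
  -- upper bound on T.card
  have hTupper : T.card ≤ (n - 1) * (phiS A n).card := by
    rw [hT, Finset.card_sigma]
    calc ∑ N ∈ phiS A n, (N.filter _).card
        ≤ ∑ _N ∈ phiS A n, (n - 1) := by
          apply Finset.sum_le_sum
          intro N hN
          exact indeg_le hn hA hN
      _ = (n - 1) * (phiS A n).card := by rw [Finset.sum_const, smul_eq_mul, mul_comm]
  have hHA := half_card_eq_two_HA hA hM (n := n)
  have hcards : ((halfS A n).filter (fun B => M ∈ B)).card = (phiS A n).card := by omega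
  rw [hcards] at hElower
  by_contra hne
  have hpos' : 0 < (phiS A n).card := by omega
  have : n * (phiS A n).card ≤ (n - 1) * (phiS A n).card := le_trans hElower (le_trans hinj hTupper)
  have hlt : (n - 1) * (phiS A n).card < n * (phiS A n).card :=
    Nat.mul_lt_mul_of_lt_of_le (by omega) (le_refl _) hpos'
  omega


/-- `A` is a `k`-anti-pencil: the `k`-element divisors of `A` are precisely the `k`-element
subsets of `A \ {max A}`. -/
def IsKAntiPencil (k : ℕ) (A : Finset ℕ) : Prop :=
  ∃ M ∈ A, (∀ x ∈ A, x ≤ M) ∧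
    ∀ B : Finset ℕ, (B ⊆ A ∧ B.card = k ∧ B.sum id ∣ A.sum id) ↔
      (B ⊆ A.erase M ∧ B.card = k)

/-- For `n ≥ 3`, if a set `A` of `2n` positive integers has exactly `(1/2) * (2n).choose n`
divisors of size `n`, then `A` is an `n`-anti-pencil. -/
theorem stmt_16 (n : ℕ) (hn : 3 ≤ n) (A : Finset ℕ) (hcard : A.card = 2 * n)
    (hpos : ∀ a ∈ A, 0 < a)
    (hnum : 2 * (A.powerset.filter (fun B => B.card = n ∧ B.sum id ∣ A.sum id)).card
      = (2 * n).choose n) :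
    IsKAntiPencil n A := by
  classical
  have hAne : A.Nonempty := by rw [← Finset.card_pos, hcard]; omega
  set M := A.max' hAne with hMdef
  have hM : M ∈ A := A.max'_mem hAne
  have hMmax : ∀ x ∈ A, x ≤ M := fun x hx => A.le_max' x hx
  have hFeq : A.powerset.filter (fun B => B.card = n ∧ B.sum id ∣ A.sum id)
      = (psetN A n).filter (fun B => B.sum id ∣ A.sum id) := by
    rw [psetN, Finset.filter_filter]
  rw [hFeq] at hnum
  have hP : (psetN A n).card = (2 * n).choose n := card_psetN hcard
  have hhp := half_eq_two_phi (by omega) hcard hpos hnum hP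
  have hhalf0 : (halfS A n).card = 0 := half_empty hn hcard hpos hM hhp
  have hphi0 : (phiS A n).card = 0 := by omega
  have hnohalf : ∀ B ∈ psetN A n, ¬ 2 * B.sum id = A.sum id := by
    intro B hB h
    have hmem : B ∈ halfS A n := Finset.mem_filter.2 ⟨hB, h⟩
    rw [Finset.card_eq_zero.1 hhalf0] at hmem
    exact Finset.notMem_empty _ hmem
  have hlowdiv : ∀ B ∈ psetN A n, 2 * B.sum id < A.sum id → B.sum id ∣ A.sum id := by
    intro B hB hlow
    by_contra hnd
    have hmem : B ∈ phiS A n := by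
      rw [phiS, Finset.mem_filter, lowS, Finset.mem_filter]
      exact ⟨⟨hB, hlow⟩, hnd⟩
    rw [Finset.card_eq_zero.1 hphi0] at hmem
    exact Finset.notMem_empty _ hmem
  have hMhigh : ∀ B ∈ psetN A n, M ∈ B → A.sum id < 2 * B.sum id := fun B hB hMB =>
    M_sets_high hn hcard hpos hM hMmax hlowdiv hnohalf hB hMB
  refine ⟨M, hM, hMmax, ?_⟩
  intro B
  constructor
  · rintro ⟨hBA, hBcard, hBdvd⟩
    have hBP : B ∈ psetN A n := mem_psetN.2 ⟨hBA, hBcard⟩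
    have hMnB : M ∉ B := by
      intro hMB
      have hhigh := hMhigh B hBP hMB
      have hlt : B.sum id < A.sum id := sum_lt_of_mem (by omega) hcard hpos hBP
      obtain ⟨k, hk⟩ := hBdvd
      rcases Nat.lt_or_ge k 2 with h | h
      · interval_cases k <;> omega
      · have : B.sum id * 2 ≤ B.sum id * k := Nat.mul_le_mul_left _ h
        omega
    exact ⟨Finset.subset_erase.2 ⟨hBA, hMnB⟩, hBcard⟩
  · rintro ⟨hBE, hBcard⟩
    have hBA : B ⊆ A := hBE.trans (Finset.erase_subset _ _)
    have hMnB : M ∉ B := fun h => (Finset.notMem_erase M A) (hBE h)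
    refine ⟨hBA, hBcard, ?_⟩
    have hBP : B ∈ psetN A n := mem_psetN.2 ⟨hBA, hBcard⟩
    have hCP : (A \ B) ∈ psetN A n := compl_mem_psetN hcard hBP
    have hMC : M ∈ A \ B := Finset.mem_sdiff.2 ⟨hM, hMnB⟩
    have h1 := hMhigh _ hCP hMC
    have hsum := sum_compl_add hBA
    have hBlow : 2 * B.sum id < A.sum id := by omega
    exact hlowdiv B hBP hBlow
end

section
/- Let n ≥ 1 and let A be a set of n real numbers whose elements sum to zero. Then the number of subsets of A whose elements have nonnegative sum (where the empty set is counted, with sum 0) is at least 2^(n-1) + 1. -/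
open scoped Classical in
/-- For `n ≥ 1`, any set of `n` real numbers summing to zero has at least `2 ^ (n - 1) + 1`
subsets with nonnegative sum (the empty set counts, with sum `0`). -/
theorem stmt_17 (n : ℕ) (hn : 1 ≤ n) (A : Finset ℝ) (hcard : A.card = n)
    (hsum : A.sum id = 0) :
    2 ^ (n - 1) + 1 ≤ (A.powerset.filter (fun B => 0 ≤ B.sum id)).card := by
  classical
  set P := A.powerset with hP
  set S := P.filter (fun B => 0 ≤ B.sum id) with hS
  set T := P.filter (fun B => B.sum id ≤ 0) with hT
  have key : ∀ B : Finset ℝ, B ⊆ A → (A \ B).sum id = - B.sum id := by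
    intro B hB
    have h1 : (A \ B).sum id + B.sum id = A.sum id := Finset.sum_sdiff hB
    rw [hsum] at h1; linarith
  have hST : S.card = T.card := by
    apply Finset.card_bij (fun B _ => A \ B)
    · intro B hB
      simp only [hS, hT, hP, Finset.mem_filter, Finset.mem_powerset] at hB ⊢
      obtain ⟨hBA, hB0⟩ := hB
      refine ⟨Finset.sdiff_subset, ?_⟩
      rw [key B hBA]; linarith
    · intro B1 h1 B2 h2 h
      simp only [hS, hP, Finset.mem_filter, Finset.mem_powerset] at h1 h2
      have e1 : A \ (A \ B1) = B1 := Finset.sdiff_sdiff_eq_self h1.1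
      have e2 : A \ (A \ B2) = B2 := Finset.sdiff_sdiff_eq_self h2.1
      rw [← e1, ← e2, h]
    · intro B hB
      simp only [hT, hP, Finset.mem_filter, Finset.mem_powerset] at hB
      refine ⟨A \ B, ?_, Finset.sdiff_sdiff_eq_self hB.1⟩
      simp only [hS, hP, Finset.mem_filter, Finset.mem_powerset]
      refine ⟨Finset.sdiff_subset, ?_⟩
      rw [key B hB.1]; linarith [hB.2]
  have hunion : P ⊆ S ∪ T := by
    intro B hB
    rcases le_total 0 (B.sum id) with h | h
    · exact Finset.mem_union_left _ (Finset.mem_filter.mpr ⟨hB, h⟩)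
    · exact Finset.mem_union_right _ (Finset.mem_filter.mpr ⟨hB, h⟩)
  have hAne : A ≠ ∅ := by
    intro h; rw [h] at hcard; simp at hcard; omega
  have hinter : ({∅, A} : Finset (Finset ℝ)) ⊆ S ∩ T := by
    intro B hB
    simp only [Finset.mem_insert, Finset.mem_singleton] at hB
    rcases hB with rfl | rfl
    · simp [hS, hT, hP, Finset.mem_filter, Finset.mem_powerset]
    · simp only [hS, hT, hP, Finset.mem_inter, Finset.mem_filter, Finset.mem_powerset]
      exact ⟨⟨subset_rfl, hsum.ge⟩, ⟨subset_rfl, hsum.le⟩⟩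
  have hc2 : 2 ≤ (S ∩ T).card := by
    have : ({∅, A} : Finset (Finset ℝ)).card = 2 := by
      rw [Finset.card_insert_of_notMem (by simpa using hAne.symm)]
      simp
    calc 2 = ({∅, A} : Finset (Finset ℝ)).card := this.symm
      _ ≤ (S ∩ T).card := Finset.card_le_card hinter
  have hPcard : P.card = 2 ^ n := by
    rw [hP, Finset.card_powerset, hcard]
  have hcu : (S ∪ T).card + (S ∩ T).card = S.card + T.card :=
    Finset.card_union_add_card_inter S T
  have hle : P.card ≤ (S ∪ T).card := Finset.card_le_card hunion
  have h2n : 2 ^ n = 2 * 2 ^ (n - 1) := by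
    rw [← pow_succ']; congr 1; omega
  omega
end

section
/- For every n ≥ 2, the set A = {1, 2, ..., n-1} ∪ {-n(n-1)/2} is a set of n real numbers with total sum 0 that has exactly 2^(n-1) + 1 subsets whose elements have nonnegative sum (counting the empty set, whose sum is 0). -/
lemma gauss_real (m : ℕ) : ∑ i ∈ Finset.Icc 1 m, (i : ℝ) = m * (m + 1) / 2 := by
  induction m with
  | zero => simp
  | succ k ih =>
    rw [Finset.sum_Icc_succ_top (by omega), ih]
    push_cast
    ring

open scoped Classical in
/-- For `n ≥ 2`, the set `A = {1, 2, ..., n - 1} ∪ {-n(n-1)/2}` consists of `n` real numbers,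
sums to zero, and has exactly `2 ^ (n - 1) + 1` subsets with nonnegative sum. -/
theorem stmt_18 (n : ℕ) (hn : 2 ≤ n) :
    ∀ A : Finset ℝ,
      A = insert (-(n * (n - 1) / 2 : ℝ)) ((Finset.Icc 1 (n - 1)).image (fun i : ℕ => (i : ℝ))) →
      A.card = n ∧ A.sum id = 0 ∧
        (A.powerset.filter (fun B => 0 ≤ B.sum id)).card = 2 ^ (n - 1) + 1 := by
  intro A hA
  set m : ℝ := -(n * (n - 1) / 2 : ℝ) with hm
  set S : Finset ℝ := (Finset.Icc 1 (n - 1)).image (fun i : ℕ => (i : ℝ)) with hS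
  have hinj : Function.Injective (fun i : ℕ => (i : ℝ)) := fun a b h => by
    simpa using h
  have hpos : ∀ x ∈ S, (1 : ℝ) ≤ x := by
    intro x hx
    simp only [hS, Finset.mem_image, Finset.mem_Icc] at hx
    obtain ⟨i, ⟨h1, _⟩, rfl⟩ := hx
    exact_mod_cast h1
  have hn2 : (2 : ℝ) ≤ (n : ℝ) := by exact_mod_cast hn
  have hmneg : m < 0 := by
    rw [hm]; nlinarith
  have hmS : m ∉ S := fun h => by linarith [hpos m h]
  have hcardS : S.card = n - 1 := by
    rw [hS, Finset.card_image_of_injective _ hinj, Nat.card_Icc]; omega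
  have hsumS : S.sum id = (n : ℝ) * ((n : ℝ) - 1) / 2 := by
    rw [hS, Finset.sum_image (fun a _ b _ h => hinj h)]
    have h := gauss_real (n - 1)
    have hn1 : ((n - 1 : ℕ) : ℝ) = (n : ℝ) - 1 := by
      rw [Nat.cast_sub (by omega)]; simp
    simp only [id]
    rw [h, hn1]; ring
  have hkey : m + S.sum id = 0 := by rw [hm, hsumS]; ring
  have hsumA : A.sum id = 0 := by
    rw [hA, Finset.sum_insert hmS]
    simpa using hkey
  refine ⟨?_, hsumA, ?_⟩
  · rw [hA, Finset.card_insert_of_notMem hmS, hcardS]; omega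
  · rw [hA, Finset.powerset_insert, Finset.filter_union]
    have h1 : S.powerset.filter (fun B => 0 ≤ B.sum id) = S.powerset := by
      apply Finset.filter_true_of_mem
      intro B hB
      rw [Finset.mem_powerset] at hB
      exact Finset.sum_nonneg fun x hx => le_trans zero_le_one (hpos x (hB hx))
    have h2 : (S.powerset.image (insert m)).filter (fun B => 0 ≤ B.sum id) = {insert m S} := by
      ext B
      simp only [Finset.mem_filter, Finset.mem_image, Finset.mem_powerset,
        Finset.mem_singleton]
      constructor
      · rintro ⟨⟨C, hCS, rfl⟩, hsum⟩
        have hmC : m ∉ C := fun h => by linarith [hpos m (hCS h)]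
        rw [Finset.sum_insert hmC] at hsum
        simp only [id_eq] at hsum
        have hCeqS : C = S := by
          by_contra hne
          have hss : C ⊂ S := Finset.ssubset_iff_subset_ne.mpr ⟨hCS, hne⟩
          obtain ⟨x, hxS, hxC⟩ := Finset.exists_of_ssubset hss
          have hlt : C.sum id < S.sum id :=
            Finset.sum_lt_sum_of_subset hCS hxS hxC (lt_of_lt_of_le zero_lt_one (hpos x hxS))
              (fun j hj _ => le_trans zero_le_one (hpos j hj))
          simp only [id_eq] at hlt
          have hkey2 : m + ∑ x ∈ S, x = 0 := by simpa using hkey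
          linarith
        rw [hCeqS]
      · rintro rfl
        refine ⟨⟨S, Finset.Subset.refl S, rfl⟩, ?_⟩
        rw [Finset.sum_insert hmS]
        simpa using le_of_eq hkey.symm
    have hdisj : Disjoint S.powerset ({insert m S} : Finset (Finset ℝ)) := by
      rw [Finset.disjoint_singleton_right, Finset.mem_powerset]
      intro h
      exact hmS (h (Finset.mem_insert_self m S))
    rw [h1, h2, Finset.card_union_of_disjoint hdisj, Finset.card_powerset, hcardS,
      Finset.card_singleton]
end
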